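/- Let w ∈ ℝᵈ, b ∈ ℝ, and ξ ∈ ℝᵈ with 0 < ξᵢ ≤ 1 for all i. If y_{1:d}(t) = ln(ξ) is constant and y_{d+1}(t) = exp(t·(⟨w, ln(ξ)⟩ + b)) with y_{d+1}(0) = 1, then y_{d+1}' = (⟨w, y_{1:d}⟩ + b)·y_{d+1} and at time 1, y_{d+1}(1) = e^b · ξ₁^{w₁} · ··· · ξ_d^{w_d}. -/
import Mathlib


open scoped BigOperators

/-- Lemma 3 of the paper: with `y_{1:d} = ln ξ` frozen, the state
`y_{d+1}(t) = exp (t (⟨w, ln ξ⟩ + b))` solves `y' = (⟨w, y_{1:d}⟩ + b) y` with `y 0 = 1`,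
and `y 1 = e^b ∏ i, ξ i ^ (w i)` (real powers). -/
theorem stmt_4 (d : ℕ) (w ξ : Fin d → ℝ) (b : ℝ)
    (hξ : ∀ i, 0 < ξ i ∧ ξ i ≤ 1) :
    (∀ t : ℝ, HasDerivAt
      (fun s : ℝ => Real.exp (s * ((∑ i, w i * Real.log (ξ i)) + b)))
      (((∑ i, w i * Real.log (ξ i)) + b) *
        Real.exp (t * ((∑ i, w i * Real.log (ξ i)) + b))) t) ∧
    Real.exp ((0:ℝ) * ((∑ i, w i * Real.log (ξ i)) + b)) = 1 ∧
    Real.exp ((1:ℝ) * ((∑ i, w i * Real.log (ξ i)) + b)) =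
      Real.exp b * ∏ i, Real.rpow (ξ i) (w i) := by
  set c := (∑ i, w i * Real.log (ξ i)) + b with hc
  refine ⟨fun t => ?_, by simp, ?_⟩
  · simpa [mul_comm] using ((hasDerivAt_id t).mul_const c).exp
  · rw [one_mul, hc, Real.exp_add, Real.exp_sum, mul_comm]
    congr 1
    exact Finset.prod_congr rfl fun i _ => by
      (rw [show Real.rpow (ξ i) (w i) = Real.exp (Real.log (ξ i) * w i) from Real.rpow_def_of_pos (hξ i).1 _, mul_comm])
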